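/- Let (C, τ^C) be a compact Hausdorff space and (Θ, τ^Θ) a Hausdorff space (not necessarily compact), U : Θ × C → ℝ jointly continuous, V : Θ × C → ℝ jointly upper semicontinuous and uniformly bounded, u̲ : Θ → ℝ, and suppose there exists c* ∈ C with U(θ, c*) ≥ u̲(θ) for all θ ∈ Θ. Let 𝕂 be a nonempty set of regular Borel probability measures on Θ and α : 𝕂 → ℝ. Then there exists D* ∈ T attaining the supremum sup_{D ∈ T} inf_{κ ∈ 𝕂} { ∫_Θ V*(θ, D) dκ(θ) + α(κ) }, where T := {D ∈ CL(C) : sup_{d ∈ D} U(θ, d) ≥ u̲(θ) for all θ ∈ Θ} and V*(θ, D) := sup_{d ∈ Φ(θ, D)} V(θ, d) with Φ(θ, D) := argmax_{d ∈ D} U(θ, d). -/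

import Mathlib

/-- The hyperspace of nonempty closed subsets of a topological space. -/
def CL (C : Type*) [TopologicalSpace C] : Type _ :=
  {A : Set C // A.Nonempty ∧ IsClosed A}

/-- The subbase for the Fell topology: all sets
`V⁻ = {A : A ∩ V ≠ ∅}` and `W⁺ = {A : A ⊆ W}` for `V`, `W` nonempty open. -/
def fellSubbasis (C : Type*) [TopologicalSpace C] : Set (Set (CL C)) :=
  {s | (∃ V : Set C, IsOpen V ∧ V.Nonempty ∧ s = {A : CL C | (A.1 ∩ V).Nonempty}) ∨
       (∃ W : Set C, IsOpen W ∧ W.Nonempty ∧ s = {A : CL C | A.1 ⊆ W})}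

/-- The Fell topology on the hyperspace of nonempty closed subsets. -/
instance fellTopology (C : Type*) [TopologicalSpace C] : TopologicalSpace (CL C) :=
  TopologicalSpace.generateFrom (fellSubbasis C)

/-- The agent's indirect utility over menus: `U*(θ, D) = sup_{d ∈ D} U(θ, d)`. -/
noncomputable def Ustar {Θ C : Type*} [TopologicalSpace C]
    (U : Θ × C → ℝ) (θ : Θ) (D : CL C) : ℝ :=
  sSup ((fun d => U (θ, d)) '' D.1)


/-- The agent's argmax correspondence:
`Φ(θ, D) = {d ∈ D : U(θ, d) = sup_{d' ∈ D} U(θ, d')}`. -/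
noncomputable def Phi {Θ C : Type*} [TopologicalSpace C]
    (U : Θ × C → ℝ) (θ : Θ) (D : CL C) : Set C :=
  {d ∈ D.1 | U (θ, d) = Ustar U θ D}

/-- The principal's indirect utility over menus:
`V*(θ, D) = sup_{d ∈ Φ(θ, D)} V(θ, d)`. -/
noncomputable def Vstar {Θ C : Type*} [TopologicalSpace C]
    (U V : Θ × C → ℝ) (θ : Θ) (D : CL C) : ℝ :=
  sSup ((fun d => V (θ, d)) '' Phi U θ D)

/-- The set of individually rational menus:
`T = {D ∈ CL(C) : sup_{d ∈ D} U(θ, d) ≥ u̲(θ) for all θ}`. -/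
noncomputable def menusIR {Θ C : Type*} [TopologicalSpace C]
    (U : Θ × C → ℝ) (ulow : Θ → ℝ) : Set (CL C) :=
  {D : CL C | ∀ θ : Θ, ulow θ ≤ Ustar U θ D}

section Aux

open Filter Topology Set

set_option linter.unusedSectionVars false
variable {Θ C : Type*} [TopologicalSpace C] [CompactSpace C] [T2Space C] [TopologicalSpace Θ]

lemma CL.isCompact (D : CL C) : IsCompact D.1 := D.2.2.isCompact

variable {U V : Θ × C → ℝ}

lemma bddAbove_image_CL {f : C → ℝ} (hf : Continuous f) (D : CL C) :
    BddAbove (f '' D.1) := (D.isCompact.image hf).bddAbove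

lemma le_Ustar (hU : Continuous U) (θ : Θ) (D : CL C) {d : C}
    (hd : d ∈ D.1) : U (θ, d) ≤ Ustar U θ D :=
  le_csSup (bddAbove_image_CL (hU.comp (Continuous.prodMk_right θ)) D) ⟨d, hd, rfl⟩

lemma exists_Ustar_max (hU : Continuous U) (θ : Θ) (D : CL C) :
    ∃ d ∈ D.1, U (θ, d) = Ustar U θ D := by
  obtain ⟨d, hd, hmax⟩ := D.isCompact.exists_isMaxOn D.2.1
    ((hU.comp (Continuous.prodMk_right θ)).continuousOn)
  refine ⟨d, hd, le_antisymm (le_Ustar hU θ D hd) (csSup_le (D.2.1.image _) ?_)⟩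
  rintro _ ⟨e, he, rfl⟩
  exact hmax he

lemma Phi_nonempty (hU : Continuous U) (θ : Θ) (D : CL C) : (Phi U θ D).Nonempty := by
  obtain ⟨d, hd, h⟩ := exists_Ustar_max hU θ D
  exact ⟨d, hd, h⟩

lemma Vstar_image_bddAbove {M : ℝ} (hM : ∀ p : Θ × C, |V p| ≤ M) (θ : Θ) (D : CL C) :
    BddAbove ((fun d => V (θ, d)) '' Phi U θ D) := by
  refine ⟨M, ?_⟩
  rintro _ ⟨d, _, rfl⟩
  exact (abs_le.1 (hM _)).2

lemma Vstar_le {M : ℝ} (hU : Continuous U) (hM : ∀ p : Θ × C, |V p| ≤ M) (θ : Θ) (D : CL C) :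
    Vstar U V θ D ≤ M := by
  refine csSup_le ((Phi_nonempty hU θ D).image _) ?_
  rintro _ ⟨d, _, rfl⟩
  exact (abs_le.1 (hM _)).2

lemma le_Vstar {M : ℝ} (hM : ∀ p : Θ × C, |V p| ≤ M) (θ : Θ) (D : CL C)
    {d : C} (hd : d ∈ Phi U θ D) : V (θ, d) ≤ Vstar U V θ D :=
  le_csSup (Vstar_image_bddAbove hM θ D) ⟨d, hd, rfl⟩

lemma neg_le_Vstar {M : ℝ} (hU : Continuous U) (hM : ∀ p : Θ × C, |V p| ≤ M)
    (θ : Θ) (D : CL C) : -M ≤ Vstar U V θ D := by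
  obtain ⟨d, hd⟩ := Phi_nonempty hU θ D
  exact le_trans (abs_le.1 (hM (θ, d))).1 (le_Vstar hM θ D hd)

/-! ### Fell topology helpers -/

lemma isOpen_fell_hit {V : Set C} (hV : IsOpen V) (hne : V.Nonempty) :
    IsOpen {A : CL C | (A.1 ∩ V).Nonempty} :=
  TopologicalSpace.isOpen_generateFrom_of_mem (Or.inl ⟨V, hV, hne, rfl⟩)

lemma isOpen_fell_miss {W : Set C} (hW : IsOpen W) (hne : W.Nonempty) :
    IsOpen {A : CL C | A.1 ⊆ W} :=
  TopologicalSpace.isOpen_generateFrom_of_mem (Or.inr ⟨W, hW, hne, rfl⟩)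

lemma CL.tendsto_nhds {ι : Type*} {l : Filter ι} {f : ι → CL C} {D : CL C}
    (h : ∀ s ∈ fellSubbasis C, D ∈ s → ∀ᶠ i in l, f i ∈ s) :
    Tendsto f l (𝓝 D) := by
  have hnhds : (𝓝 D : Filter (CL C)) = ⨅ s ∈ {s | D ∈ s ∧ s ∈ fellSubbasis C}, 𝓟 s :=
    TopologicalSpace.nhds_generateFrom
  rw [hnhds]
  simp only [tendsto_iInf, tendsto_principal]
  rintro s ⟨hDs, hs⟩
  exact h s hs hDs

lemma mem_of_ultrafilter_fell {ι : Type*} (𝒰 : Ultrafilter ι) {Df : ι → CL C} {df : ι → C}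
    {D₀ : CL C} {dlim : C} (hD : Tendsto Df 𝒰 (𝓝 D₀)) (hd : Tendsto df 𝒰 (𝓝 dlim))
    (hmem : ∀ᶠ i in (𝒰 : Filter ι), df i ∈ (Df i).1) : dlim ∈ D₀.1 := by
  by_contra hcon
  obtain ⟨Vo, Wo, hVo, hWo, hdV, hDW, hdisj⟩ :=
    SeparatedNhds.of_isCompact_isCompact (isCompact_singleton (x := dlim)) D₀.isCompact
      (by simpa [Set.disjoint_singleton_left] using hcon)
  have hmiss : ∀ᶠ i in (𝒰 : Filter ι), Df i ∈ {A : CL C | A.1 ⊆ Wo} :=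
    hD.eventually ((isOpen_fell_miss hWo (D₀.2.1.mono hDW)).mem_nhds hDW)
  have hV : ∀ᶠ i in (𝒰 : Filter ι), df i ∈ Vo :=
    hd.eventually (hVo.mem_nhds (hdV rfl))
  obtain ⟨i, h1, h2, h3⟩ := (hmiss.and (hV.and hmem)).exists
  exact hdisj.le_bot ⟨h2, h1 h3⟩

end Aux
section Aux2
open Filter Topology Set
set_option linter.unusedSectionVars false
variable {Θ C : Type*} [TopologicalSpace C] [CompactSpace C] [T2Space C] [TopologicalSpace Θ]
variable {U V : Θ × C → ℝ}

instance CL.compactSpace : CompactSpace (CL C) := by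
  constructor
  rw [isCompact_iff_ultrafilter_le_nhds]
  intro 𝒰 _
  classical
  set L : Set C := {x | ∀ V : Set C, IsOpen V → x ∈ V →
    {A : CL C | (A.1 ∩ V).Nonempty} ∈ (𝒰 : Filter (CL C))} with hL
  -- a selection of points converging to a member of L
  have hsel : ∀ (t : CL C → C), (∀ᶠ A in (𝒰 : Filter (CL C)), t A ∈ A.1) →
      ∃ x ∈ L, Tendsto t 𝒰 (𝓝 x) := by
    intro t ht
    obtain ⟨x, -, hx⟩ := isCompact_univ.ultrafilter_le_nhds (𝒰.map t)
      (by simp [le_principal_iff])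
    have hx' : Tendsto t 𝒰 (𝓝 x) := by rwa [show (↑(Ultrafilter.map t 𝒰) : Filter C) = Filter.map t ↑𝒰 from rfl] at hx
    refine ⟨x, ?_, hx'⟩
    intro V hV hxV
    have h1 : ∀ᶠ A in (𝒰 : Filter (CL C)), t A ∈ V := hx'.eventually (hV.mem_nhds hxV)
    filter_upwards [h1, ht] with A hA1 hA2
    exact ⟨t A, hA2, hA1⟩
  obtain ⟨x₀, hx₀L, -⟩ := hsel (fun A => A.2.1.some) (Eventually.of_forall fun A => A.2.1.some_mem)
  have hLclosed : IsClosed L := by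
    rw [← isOpen_compl_iff, isOpen_iff_forall_mem_open]
    intro y hy
    simp only [mem_compl_iff, hL, mem_setOf_eq, not_forall] at hy
    obtain ⟨V, hV, hyV, hnot⟩ := hy
    exact ⟨V, fun z hz hzL => hnot (hzL V hV hz), hV, hyV⟩
  refine ⟨⟨L, ⟨x₀, hx₀L⟩, hLclosed⟩, mem_univ _, ?_⟩
  have : Tendsto (id : CL C → CL C) 𝒰 (𝓝 ⟨L, ⟨x₀, hx₀L⟩, hLclosed⟩) := by
    apply CL.tendsto_nhds
    rintro s (⟨V, hV, hVne, rfl⟩ | ⟨W, hW, hWne, rfl⟩) hmem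
    · obtain ⟨y, hyL, hyV⟩ := hmem
      exact hyL V hV hyV
    · -- L ⊆ W; show {A | A.1 ⊆ W} ∈ 𝒰
      by_contra hcon
      have hcompl : {A : CL C | ¬ A.1 ⊆ W} ∈ (𝒰 : Filter (CL C)) := by
        rw [show {A : CL C | ¬ A.1 ⊆ W} = {A : CL C | A.1 ⊆ W}ᶜ from rfl]
        exact (Ultrafilter.compl_mem_iff_notMem).2 hcon
      set t : CL C → C := fun A =>
        if h : (A.1 ∩ Wᶜ).Nonempty then h.some else A.2.1.some with hT
      have htmem : ∀ᶠ A in (𝒰 : Filter (CL C)), t A ∈ A.1 ∩ Wᶜ := by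
        filter_upwards [hcompl] with A hA
        have h : (A.1 ∩ Wᶜ).Nonempty := by
          rw [not_subset] at hA
          obtain ⟨a, ha, haW⟩ := hA
          exact ⟨a, ha, haW⟩
        simp only [hT, dif_pos h]
        exact h.some_mem
      obtain ⟨y, hyL, hyt⟩ := hsel t (htmem.mono fun A hA => hA.1)
      have hyWc : y ∈ Wᶜ :=
        hW.isClosed_compl.mem_of_tendsto hyt (htmem.mono fun A hA => hA.2)
      exact hyWc (hmem hyL)
  exact this

lemma Ustar_le_of_tendsto {ι : Type*} (𝒰 : Ultrafilter ι) (hU : Continuous U)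
    {θf : ι → Θ} {Df : ι → CL C} {df : ι → C} {θ₀ : Θ} {D₀ : CL C} {dlim : C}
    (hθ : Tendsto θf 𝒰 (𝓝 θ₀)) (hD : Tendsto Df 𝒰 (𝓝 D₀)) (hd : Tendsto df 𝒰 (𝓝 dlim))
    (hmax : ∀ᶠ i in (𝒰 : Filter ι), Ustar U (θf i) (Df i) ≤ U (θf i, df i)) :
    Ustar U θ₀ D₀ ≤ U (θ₀, dlim) := by
  refine csSup_le (D₀.2.1.image _) ?_
  rintro _ ⟨d', hd', rfl⟩
  by_contra hlt
  push_neg at hlt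
  set c : ℝ := (U (θ₀, dlim) + U (θ₀, d')) / 2 with hc
  have hc1 : U (θ₀, dlim) < c := by simp only [hc]; linarith
  have hc2 : c < U (θ₀, d') := by simp only [hc]; linarith
  have hO : U ⁻¹' (Ioi c) ∈ 𝓝 (θ₀, d') :=
    (isOpen_Ioi.preimage hU).mem_nhds (by simpa using hc2)
  rw [mem_nhds_prod_iff'] at hO
  obtain ⟨u, v, hu, hθu, hv, hd'v, huv⟩ := hO
  have hhit : ∀ᶠ i in (𝒰 : Filter ι), Df i ∈ {A : CL C | (A.1 ∩ v).Nonempty} :=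
    hD.eventually ((isOpen_fell_hit hv ⟨d', hd'v⟩).mem_nhds ⟨d', hd', hd'v⟩)
  have hθev : ∀ᶠ i in (𝒰 : Filter ι), θf i ∈ u := hθ.eventually (hu.mem_nhds hθu)
  have hev : ∀ᶠ i in (𝒰 : Filter ι), c ≤ U (θf i, df i) := by
    filter_upwards [hhit, hθev, hmax] with i h1 h2 h3
    obtain ⟨e, he, hev⟩ := h1
    have : c < U (θf i, e) := huv (Set.mk_mem_prod h2 hev)
    exact le_trans this.le (le_trans (le_Ustar hU _ _ he) h3)
  have hclosed : IsClosed {p : Θ × C | c ≤ U p} := isClosed_le continuous_const hU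
  have := hclosed.mem_of_tendsto (hθ.prodMk_nhds hd) hev
  exact absurd (lt_of_lt_of_le hc1 this) (lt_irrefl _)

end Aux2
section Aux3
open Filter Topology Set
set_option linter.unusedSectionVars false
variable {Θ C : Type*} [TopologicalSpace C] [CompactSpace C] [T2Space C] [TopologicalSpace Θ]
variable {U V : Θ × C → ℝ}

lemma usc_Vstar (hU : Continuous U) (hV : UpperSemicontinuous V)
    {M : ℝ} (hM : ∀ p : Θ × C, |V p| ≤ M) :
    UpperSemicontinuous (fun p : Θ × CL C => Vstar U V p.1 p.2) := by
  intro p₀ y hy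
  by_contra hcon
  rw [not_eventually] at hcon
  set S : Set (Θ × CL C) := {p | y ≤ Vstar U V p.1 p.2} with hSdef
  have hne : (𝓝 p₀ ⊓ 𝓟 S).NeBot := by
    rw [← frequently_mem_iff_neBot]
    exact hcon.mono fun p hp => not_lt.1 hp
  set 𝒰 : Ultrafilter (Θ × CL C) := Ultrafilter.of (𝓝 p₀ ⊓ 𝓟 S) with h𝒰def
  have h𝒰le : (𝒰 : Filter (Θ × CL C)) ≤ 𝓝 p₀ ⊓ 𝓟 S := Ultrafilter.of_le _
  have hS : S ∈ 𝒰 := le_principal_iff.1 (h𝒰le.trans inf_le_right)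
  have hnhds : (𝒰 : Filter (Θ × CL C)) ≤ 𝓝 p₀ := h𝒰le.trans inf_le_left
  set y' : ℝ := (Vstar U V p₀.1 p₀.2 + y) / 2 with hy'def
  have hy'1 : Vstar U V p₀.1 p₀.2 < y' := by simp only [hy'def]; linarith
  have hy'2 : y' < y := by simp only [hy'def]; linarith
  classical
  set df : Θ × CL C → C := fun p =>
    if h : ∃ d ∈ Phi U p.1 p.2, y' < V (p.1, d) then h.choose else p.2.2.1.some with hdfdef
  have hdf : ∀ p ∈ S, df p ∈ Phi U p.1 p.2 ∧ y' < V (p.1, df p) := by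
    intro p hp
    have hnon : ((fun d => V (p.1, d)) '' Phi U p.1 p.2).Nonempty :=
      (Phi_nonempty hU _ _).image _
    obtain ⟨_, ⟨d, hd, rfl⟩, hlt⟩ :=
      exists_lt_of_lt_csSup hnon (lt_of_lt_of_le hy'2 hp)
    have hex : ∃ d ∈ Phi U p.1 p.2, y' < V (p.1, d) := ⟨d, hd, hlt⟩
    simp only [hdfdef, dif_pos hex]
    exact hex.choose_spec
  obtain ⟨dlim, -, hdlim⟩ := isCompact_univ.ultrafilter_le_nhds (𝒰.map df)
    (by simp [le_principal_iff])
  have hd : Tendsto df 𝒰 (𝓝 dlim) := by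
    rwa [show (↑(Ultrafilter.map df 𝒰) : Filter C) = Filter.map df ↑𝒰 from rfl] at hdlim
  have hθ : Tendsto Prod.fst (𝒰 : Filter (Θ × CL C)) (𝓝 p₀.1) :=
    (continuous_fst.tendsto p₀).mono_left hnhds
  have hDt : Tendsto Prod.snd (𝒰 : Filter (Θ × CL C)) (𝓝 p₀.2) :=
    (continuous_snd.tendsto p₀).mono_left hnhds
  have hmemS : ∀ᶠ p in (𝒰 : Filter (Θ × CL C)), p ∈ S := hS
  have hmemD : ∀ᶠ p in (𝒰 : Filter (Θ × CL C)), df p ∈ (p.2).1 :=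
    hmemS.mono fun p hp => ((hdf p hp).1).1
  have hdlimD : dlim ∈ p₀.2.1 := mem_of_ultrafilter_fell 𝒰 hDt hd hmemD
  have hUst : Ustar U p₀.1 p₀.2 ≤ U (p₀.1, dlim) :=
    Ustar_le_of_tendsto 𝒰 hU hθ hDt hd (hmemS.mono fun p hp => ((hdf p hp).1).2.ge)
  have hdlimPhi : dlim ∈ Phi U p₀.1 p₀.2 :=
    ⟨hdlimD, le_antisymm (le_Ustar hU _ _ hdlimD) hUst⟩
  have hVle : y' ≤ V (p₀.1, dlim) := by
    have hcl : IsClosed {q : Θ × C | y' ≤ V q} :=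
      upperSemicontinuous_iff_isClosed_preimage.1 hV y'
    exact hcl.mem_of_tendsto (hθ.prodMk_nhds hd)
      (hmemS.mono fun p hp => le_of_lt (hdf p hp).2)
  have : y' ≤ Vstar U V p₀.1 p₀.2 := le_trans hVle (le_Vstar hM _ _ hdlimPhi)
  linarith

lemma usc_Ustar (hU : Continuous U) (θ : Θ) :
    UpperSemicontinuous (fun D : CL C => Ustar U θ D) := by
  intro D₀ y hy
  by_contra hcon
  rw [not_eventually] at hcon
  set S : Set (CL C) := {D | y ≤ Ustar U θ D} with hSdef
  have hne : (𝓝 D₀ ⊓ 𝓟 S).NeBot := by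
    rw [← frequently_mem_iff_neBot]
    exact hcon.mono fun D hD => not_lt.1 hD
  set 𝒰 : Ultrafilter (CL C) := Ultrafilter.of (𝓝 D₀ ⊓ 𝓟 S) with h𝒰def
  have h𝒰le : (𝒰 : Filter (CL C)) ≤ 𝓝 D₀ ⊓ 𝓟 S := Ultrafilter.of_le _
  have hS : S ∈ 𝒰 := le_principal_iff.1 (h𝒰le.trans inf_le_right)
  have hnhds : (𝒰 : Filter (CL C)) ≤ 𝓝 D₀ := h𝒰le.trans inf_le_left
  classical
  set df : CL C → C := fun D => (exists_Ustar_max hU θ D).choose with hdfdef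
  have hdf : ∀ D : CL C, df D ∈ D.1 ∧ U (θ, df D) = Ustar U θ D := fun D =>
    ⟨(exists_Ustar_max hU θ D).choose_spec.1, (exists_Ustar_max hU θ D).choose_spec.2⟩
  obtain ⟨dlim, -, hdlim⟩ := isCompact_univ.ultrafilter_le_nhds (𝒰.map df)
    (by simp [le_principal_iff])
  have hd : Tendsto df 𝒰 (𝓝 dlim) := by
    rwa [show (↑(Ultrafilter.map df 𝒰) : Filter C) = Filter.map df ↑𝒰 from rfl] at hdlim
  have hDt : Tendsto id (𝒰 : Filter (CL C)) (𝓝 D₀) := hnhds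
  have hdlimD : dlim ∈ D₀.1 :=
    mem_of_ultrafilter_fell 𝒰 hDt hd (Eventually.of_forall fun D => (hdf D).1)
  have hcl : IsClosed {d : C | y ≤ U (θ, d)} :=
    isClosed_le continuous_const (hU.comp (Continuous.prodMk_right θ))
  have hyU : y ≤ U (θ, dlim) := by
    refine hcl.mem_of_tendsto hd ?_
    have : ∀ᶠ D in (𝒰 : Filter (CL C)), D ∈ S := hS
    exact this.mono fun D hD => le_trans hD (hdf D).2.ge
  have : y ≤ Ustar U θ D₀ := le_trans hyU (le_Ustar hU θ D₀ hdlimD)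
  linarith

lemma isClosed_menusIR (hU : Continuous U) (ulow : Θ → ℝ) :
    IsClosed (menusIR U ulow) := by
  have heq : menusIR U ulow = ⋂ θ : Θ, {D : CL C | ulow θ ≤ Ustar U θ D} := by
    ext D; simp [menusIR, mem_iInter]
  rw [heq]
  exact isClosed_iInter fun θ =>
    upperSemicontinuous_iff_isClosed_preimage.1 (usc_Ustar hU θ) (ulow θ)

end Aux3
section Aux4
open Filter Topology Set MeasureTheory
set_option linter.unusedSectionVars false

lemma step_sum_eq {Δ x : ℝ} (n : ℕ) (hΔ : 0 < Δ) (hx : 0 ≤ x) :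
    ∑ i ∈ Finset.range n, (if ((i : ℝ) + 1) * Δ ≤ x then Δ else 0)
      = (min (Nat.floor (x / Δ)) n : ℕ) * Δ := by
  classical
  have hcond : ∀ i : ℕ, (((i : ℝ) + 1) * Δ ≤ x) ↔ i < Nat.floor (x / Δ) := by
    intro i
    rw [← le_div_iff₀ hΔ, show ((i : ℝ) + 1) = ((i + 1 : ℕ) : ℝ) by push_cast; ring,
      ← Nat.le_floor_iff (by positivity)]
    omega
  have : ∑ i ∈ Finset.range n, (if ((i : ℝ) + 1) * Δ ≤ x then Δ else 0)
      = ∑ i ∈ (Finset.range n).filter (fun i : ℕ => ((i : ℝ) + 1) * Δ ≤ x), Δ :=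
    (Finset.sum_filter _ _).symm
  rw [this]
  have hfil : (Finset.range n).filter (fun i : ℕ => ((i : ℝ) + 1) * Δ ≤ x)
      = Finset.range (min (Nat.floor (x / Δ)) n) := by
    ext i
    simp only [Finset.mem_filter, Finset.mem_range, hcond, Nat.lt_min]
    tauto
  rw [hfil, Finset.sum_const, Finset.card_range, nsmul_eq_mul]

lemma step_upper {M Δ x : ℝ} {n : ℕ} (hΔ : 0 < Δ) (h2M : 2 * M ≤ n * Δ)
    (h0 : 0 ≤ x) (hx : x ≤ 2 * M) :
    x ≤ Δ + ∑ i ∈ Finset.range n, (if ((i : ℝ) + 1) * Δ ≤ x then Δ else 0) := by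
  rw [step_sum_eq n hΔ h0]
  rcases le_total (Nat.floor (x / Δ)) n with h | h
  · rw [min_eq_left h]
    have h1 : x / Δ < Nat.floor (x / Δ) + 1 := Nat.lt_floor_add_one _
    have h2 : x < (Nat.floor (x / Δ) + 1) * Δ := by
      rw [← div_lt_iff₀ hΔ] at *
      linarith [h1]
    push_cast at h2 ⊢
    linarith
  · rw [min_eq_right h]
    have : (n : ℝ) * Δ ≤ ((Nat.floor (x / Δ) : ℕ) : ℝ) * Δ := by
      exact mul_le_mul_of_nonneg_right (by exact_mod_cast h) hΔ.le
    linarith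

lemma step_lower {Δ x : ℝ} {n : ℕ} (hΔ : 0 < Δ) (h0 : 0 ≤ x) :
    ∑ i ∈ Finset.range n, (if ((i : ℝ) + 1) * Δ ≤ x then Δ else 0) ≤ x := by
  rw [step_sum_eq n hΔ h0]
  have h1 : (min (Nat.floor (x / Δ)) n : ℝ) ≤ (Nat.floor (x / Δ) : ℝ) := by
    exact_mod_cast min_le_left _ _
  have h2 : (Nat.floor (x / Δ) : ℝ) ≤ x / Δ := Nat.floor_le (by positivity)
  calc (min (Nat.floor (x / Δ)) n : ℕ) * Δ ≤ (x / Δ) * Δ := by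
        push_cast
        exact mul_le_mul_of_nonneg_right (le_trans h1 h2) hΔ.le
    _ = x := div_mul_cancel₀ x hΔ.ne'

variable {Θ C : Type*} [TopologicalSpace C] [CompactSpace C] [T2Space C] [TopologicalSpace Θ]
variable {U V : Θ × C → ℝ}

lemma usc_Vstar_theta (hU : Continuous U) (hV : UpperSemicontinuous V)
    {M : ℝ} (hM : ∀ p : Θ × C, |V p| ≤ M) (D : CL C) :
    UpperSemicontinuous (fun θ => Vstar U V θ D) := by
  intro θ₀ y hy
  have h := usc_Vstar hU hV hM (θ₀, D) y hy
  have hcont : Tendsto (fun θ : Θ => (θ, D)) (𝓝 θ₀) (𝓝 (θ₀, D)) :=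
    (continuous_id.prodMk continuous_const).tendsto θ₀
  exact hcont.eventually h

lemma integrable_Vstar [MeasurableSpace Θ] [BorelSpace Θ]
    (hU : Continuous U) (hV : UpperSemicontinuous V)
    {M : ℝ} (hM : ∀ p : Θ × C, |V p| ≤ M) (D : CL C)
    (κ : MeasureTheory.Measure Θ) [IsProbabilityMeasure κ] :
    Integrable (fun θ => Vstar U V θ D) κ := by
  refine Integrable.mono' (integrable_const M)
    ((usc_Vstar_theta hU hV hM D).measurable.aestronglyMeasurable) (ae_of_all _ fun θ => ?_)
  rw [Real.norm_eq_abs, abs_le]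
  exact ⟨neg_le_Vstar hU hM θ D, Vstar_le hU hM θ D⟩

end Aux4
section Aux5
open Filter Topology Set MeasureTheory
set_option linter.unusedSectionVars false
variable {Θ C : Type*} [TopologicalSpace C] [CompactSpace C] [T2Space C] [TopologicalSpace Θ]
variable {U V : Θ × C → ℝ}

lemma usc_integral_Vstar [T2Space Θ] [MeasurableSpace Θ] [BorelSpace Θ]
    (hU : Continuous U) (hV : UpperSemicontinuous V)
    {M : ℝ} (hM : ∀ p : Θ × C, |V p| ≤ M) (hM0 : 0 ≤ M)
    (κ : Measure Θ) [IsProbabilityMeasure κ]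
    (hinner : κ.InnerRegular) (houter : κ.OuterRegular) :
    UpperSemicontinuous (fun D : CL C => ∫ θ, Vstar U V θ D ∂κ) := by
  classical
  haveI := hinner
  haveI := houter
  have hF : UpperSemicontinuous (fun p : Θ × CL C => Vstar U V p.1 p.2) := usc_Vstar hU hV hM
  intro D₀ y hy
  set g : Θ → ℝ := fun θ => Vstar U V θ D₀ with hgdef
  set I₀ : ℝ := ∫ θ, g θ ∂κ with hI₀def
  have hy' : I₀ < y := hy
  set η : ℝ := (y - I₀) / 3 with hηdef
  have hηpos : 0 < η := by simp only [hηdef]; linarith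
  set Δ : ℝ := η / 2 with hΔdef
  have hΔpos : 0 < Δ := by positivity
  set n : ℕ := Nat.ceil (4 * M / η) + 1 with hndef
  have hncast : (n : ℝ) = (Nat.ceil (4 * M / η) : ℝ) + 1 := by
    simp [hndef]
  have hnΔ_ge : 2 * M ≤ (n : ℝ) * Δ := by
    have h1 : 4 * M / η ≤ (Nat.ceil (4 * M / η) : ℝ) := Nat.le_ceil _
    have h2 : 4 * M / η * η = 4 * M := div_mul_cancel₀ _ hηpos.ne'
    have h3 : (n : ℝ) * η ≥ 4 * M := by
      rw [hncast]
      nlinarith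
    rw [hΔdef]
    linarith
  have hnΔ_le : (n : ℝ) * Δ ≤ 2 * M + η := by
    have h1 : (Nat.ceil (4 * M / η) : ℝ) < 4 * M / η + 1 :=
      Nat.ceil_lt_add_one (by positivity)
    have h2 : 4 * M / η * η = 4 * M := div_mul_cancel₀ _ hηpos.ne'
    have h3 : (n : ℝ) * η ≤ 4 * M + 2 * η := by
      rw [hncast]
      nlinarith
    rw [hΔdef]
    linarith
  set δ : ℝ := η / (4 * M + η + 1) with hδdef
  have hδpos : 0 < δ := by positivity
  have hδlt1 : δ < 1 := by
    rw [hδdef, div_lt_one (by positivity)]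
    linarith
  have hδη : (4 * M + η) * δ < η := by
    have hc : (0:ℝ) < 4 * M + η + 1 := by linarith
    rw [hδdef, ← mul_div_assoc, div_lt_iff₀ hc]
    nlinarith
  -- compact K with large measure
  obtain ⟨K, -, hKcomp, hKgt⟩ := MeasurableSet.univ.exists_lt_isCompact
    (show ENNReal.ofReal (1 - δ) < κ univ by
      rw [measure_univ]
      exact ENNReal.ofReal_lt_one.2 (by linarith))
  have hKmeas : MeasurableSet K := hKcomp.isClosed.measurableSet
  have hKc_real : (κ Kᶜ).toReal ≤ δ := by
    have h1 : (κ K).toReal + (κ Kᶜ).toReal = 1 := by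
      rw [← ENNReal.toReal_add (measure_ne_top κ K) (measure_ne_top κ Kᶜ),
        measure_add_measure_compl hKmeas, measure_univ, ENNReal.toReal_one]
    have h2 : 1 - δ ≤ (κ K).toReal := by
      have h := ENNReal.toReal_mono (measure_ne_top κ K) hKgt.le
      rwa [ENNReal.toReal_ofReal (by linarith)] at h
    linarith
  -- levels
  set t : ℕ → ℝ := fun i => -M + ((i : ℝ) + 1) * Δ with htdef
  set A : ℕ → Set Θ := fun i => g ⁻¹' Ici (t i) with hAdef
  have hgusc : UpperSemicontinuous g := usc_Vstar_theta hU hV hM D₀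
  have hAmeas : ∀ i, MeasurableSet (A i) :=
    fun i => (upperSemicontinuous_iff_isClosed_preimage.1 hgusc (t i)).measurableSet
  -- outer approximation
  have hO : ∀ i : ℕ, ∃ O : Set Θ, A i ⊆ O ∧ IsOpen O ∧ κ O ≤ κ (A i) + ENNReal.ofReal δ := by
    intro i
    obtain ⟨O, hAO, hOopen, hOlt⟩ := Set.exists_isOpen_lt_add (A i) (measure_ne_top κ _)
      (show ENNReal.ofReal δ ≠ 0 by simp [ENNReal.ofReal_eq_zero]; linarith)
    exact ⟨O, hAO, hOopen, hOlt.le⟩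
  choose O hAO hOopen hOκ using hO
  have hOreal : ∀ i, (κ (O i)).toReal ≤ (κ (A i)).toReal + δ := by
    intro i
    have h1 := ENNReal.toReal_mono (a := κ (O i)) (b := κ (A i) + ENNReal.ofReal δ)
      (by exact ENNReal.add_ne_top.2 ⟨measure_ne_top κ _, ENNReal.ofReal_ne_top⟩) (hOκ i)
    rwa [ENNReal.toReal_add (measure_ne_top κ _) ENNReal.ofReal_ne_top,
      ENNReal.toReal_ofReal hδpos.le] at h1
  -- tube lemma: the neighborhoods
  have hN : ∀ i : ℕ, ∃ N : Set (CL C), IsOpen N ∧ D₀ ∈ N ∧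
      ∀ D ∈ N, ∀ θ ∈ K, t i ≤ Vstar U V θ D → θ ∈ O i := by
    intro i
    have hBadclosed : IsClosed ((fun p : Θ × CL C => Vstar U V p.1 p.2) ⁻¹' Ici (t i)) :=
      upperSemicontinuous_iff_isClosed_preimage.1 hF (t i)
    have hsub : (K \ O i) ×ˢ ({D₀} : Set (CL C)) ⊆
        ((fun p : Θ × CL C => Vstar U V p.1 p.2) ⁻¹' Ici (t i))ᶜ := by
      rintro ⟨θ, D⟩ ⟨⟨hθK, hθO⟩, hDmem⟩
      simp only [mem_singleton_iff] at hDmem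
      subst hDmem
      intro hbad
      exact hθO (hAO i hbad)
    obtain ⟨u, v, -, hvopen, hKu, hD₀v, huv⟩ :=
      generalized_tube_lemma (hKcomp.diff (hOopen i)) isCompact_singleton
        hBadclosed.isOpen_compl hsub
    refine ⟨v, hvopen, hD₀v rfl, ?_⟩
    intro D hD θ hθK hbad
    by_contra hθO
    exact huv (Set.mk_mem_prod (hKu ⟨hθK, hθO⟩) hD) hbad
  choose N hNopen hND₀ hNprop using hN
  have hNall : (⋂ i ∈ Finset.range n, N i) ∈ 𝓝 D₀ :=
    (isOpen_biInter_finset fun i _ => hNopen i).mem_nhds (mem_iInter₂.2 fun i _ => hND₀ i)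
  -- the integral inequality for g from below
  have hgint : Integrable g κ := integrable_Vstar hU hV hM D₀ κ
  have hsumA_le : ∑ i ∈ Finset.range n, (κ (A i)).toReal * Δ ≤ I₀ + M := by
    have hlow : ∀ θ, ∑ i ∈ Finset.range n, Set.indicator (A i) (fun _ => Δ) θ ≤ g θ + M := by
      intro θ
      have hx0 : 0 ≤ g θ + M := by
        have := neg_le_Vstar (V := V) hU hM θ D₀
        simp only [hgdef]; linarith
      have hstep := step_lower (Δ := Δ) (x := g θ + M) (n := n) hΔpos hx0
      refine le_trans (le_of_eq ?_) hstep
      apply Finset.sum_congr rfl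
      intro i _
      rw [Set.indicator_apply]
      congr 1
      simp only [hAdef, mem_preimage, mem_Ici, htdef, eq_iff_iff]
      constructor <;> intro h <;> linarith
    have hintA : Integrable (fun θ => ∑ i ∈ Finset.range n,
        Set.indicator (A i) (fun _ => Δ) θ) κ :=
      integrable_finset_sum _ fun i _ => (integrable_const Δ).indicator (hAmeas i)
    have hmono := integral_mono hintA (hgint.add (integrable_const M)) hlow
    rw [integral_finset_sum _ (fun i _ => (integrable_const Δ).indicator (hAmeas i))] at hmono
    simp only [integral_indicator_const _ (hAmeas _), smul_eq_mul, Pi.add_apply] at hmono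
    rwa [integral_add hgint (integrable_const M), integral_const, probReal_univ,
      one_smul] at hmono
  -- main eventually bound
  filter_upwards [hNall] with D hD
  have hDmem : ∀ i ∈ Finset.range n, D ∈ N i := fun i hi => mem_iInter₂.1 hD i hi
  set φ : Θ → ℝ := fun θ => Vstar U V θ D with hφdef
  have hφusc : UpperSemicontinuous φ := usc_Vstar_theta hU hV hM D
  set Ci : ℕ → Set Θ := fun i => (φ ⁻¹' Ici (t i)) ∩ K with hCidef
  have hCimeas : ∀ i, MeasurableSet (Ci i) := fun i =>
    ((upperSemicontinuous_iff_isClosed_preimage.1 hφusc (t i)).measurableSet).inter hKmeas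
  have hCiO : ∀ i ∈ Finset.range n, Ci i ⊆ O i := by
    intro i hi θ hθ
    exact hNprop i D (hDmem i hi) θ hθ.2 hθ.1
  -- pointwise upper bound
  set ψ : Θ → ℝ := fun θ => (-M + Δ) + ((∑ i ∈ Finset.range n,
      Set.indicator (Ci i) (fun _ => Δ) θ) + Set.indicator Kᶜ (fun _ => 2 * M) θ) with hψdef
  have hpoint : ∀ θ, φ θ ≤ ψ θ := by
    intro θ
    have hφub : φ θ ≤ M := Vstar_le hU hM θ D
    have hφlb : -M ≤ φ θ := neg_le_Vstar hU hM θ D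
    by_cases hθK : θ ∈ K
    · have hind3 : Set.indicator Kᶜ (fun _ => 2 * M) θ = 0 :=
        Set.indicator_of_notMem (by simpa using hθK) _
      have hsum_eq : ∑ i ∈ Finset.range n, Set.indicator (Ci i) (fun _ => Δ) θ
          = ∑ i ∈ Finset.range n, (if ((i : ℝ) + 1) * Δ ≤ φ θ + M then Δ else 0) := by
        apply Finset.sum_congr rfl
        intro i _
        rw [Set.indicator_apply]
        congr 1
        simp only [hCidef, mem_inter_iff, mem_preimage, mem_Ici, htdef, eq_iff_iff]
        constructor
        · rintro ⟨h1, -⟩; linarith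
        · intro h; exact ⟨by linarith, hθK⟩
      have hstep := step_upper (M := M) (Δ := Δ) (x := φ θ + M) (n := n) hΔpos hnΔ_ge
        (by linarith) (by linarith)
      simp only [hψdef, hind3, hsum_eq]
      linarith
    · have hind3 : Set.indicator Kᶜ (fun _ => 2 * M) θ = 2 * M :=
        Set.indicator_of_mem (by simpa using hθK) _
      have hsumnn : 0 ≤ ∑ i ∈ Finset.range n, Set.indicator (Ci i) (fun _ => Δ) θ :=
        Finset.sum_nonneg fun i _ => Set.indicator_nonneg (fun _ _ => hΔpos.le) θ
      simp only [hψdef, hind3]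
      linarith
  -- integrate
  have hφint : Integrable φ κ := integrable_Vstar hU hV hM D κ
  have hintCi : Integrable (fun θ => ∑ i ∈ Finset.range n,
      Set.indicator (Ci i) (fun _ => Δ) θ) κ :=
    integrable_finset_sum _ fun i _ => (integrable_const Δ).indicator (hCimeas i)
  have hintKc : Integrable (fun θ => Set.indicator Kᶜ (fun _ => 2 * M) θ) κ :=
    (integrable_const (2 * M)).indicator hKmeas.compl
  have hint23 : Integrable (fun θ => (∑ i ∈ Finset.range n,
      Set.indicator (Ci i) (fun _ => Δ) θ) + Set.indicator Kᶜ (fun _ => 2 * M) θ) κ :=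
    hintCi.add hintKc
  have hψint : Integrable ψ κ := (integrable_const (-M + Δ)).add hint23
  have hIψ : ∫ θ, ψ θ ∂κ = (-M + Δ) + ((∑ i ∈ Finset.range n, (κ (Ci i)).toReal * Δ)
      + (κ Kᶜ).toReal * (2 * M)) := by
    simp only [hψdef]
    rw [integral_add (integrable_const (-M + Δ)) hint23, integral_const, probReal_univ,
      one_smul, integral_add hintCi hintKc,
      integral_finset_sum _ (fun i _ => (integrable_const Δ).indicator (hCimeas i))]
    simp only [integral_indicator_const _ (hCimeas _), integral_indicator_const _ hKmeas.compl,
      smul_eq_mul, measureReal_def]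
  have hIφψ : ∫ θ, φ θ ∂κ ≤ ∫ θ, ψ θ ∂κ := integral_mono hφint hψint hpoint
  have hsumCi : ∑ i ∈ Finset.range n, (κ (Ci i)).toReal * Δ
      ≤ ∑ i ∈ Finset.range n, ((κ (A i)).toReal + δ) * Δ := by
    apply Finset.sum_le_sum
    intro i hi
    refine mul_le_mul_of_nonneg_right ?_ hΔpos.le
    refine le_trans ?_ (hOreal i)
    exact ENNReal.toReal_mono (measure_ne_top κ _) (measure_mono (hCiO i hi))
  have hsum2 : ∑ i ∈ Finset.range n, ((κ (A i)).toReal + δ) * Δ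
      = (∑ i ∈ Finset.range n, (κ (A i)).toReal * Δ) + (n : ℝ) * (δ * Δ) := by
    simp only [add_mul]
    rw [Finset.sum_add_distrib, Finset.sum_const, Finset.card_range, nsmul_eq_mul]
  have hKcterm : (κ Kᶜ).toReal * (2 * M) ≤ δ * (2 * M) :=
    mul_le_mul_of_nonneg_right hKc_real (by linarith)
  have hnδΔ : (n : ℝ) * (δ * Δ) ≤ (2 * M + η) * δ := by
    have : (n : ℝ) * (δ * Δ) = ((n : ℝ) * Δ) * δ := by ring
    rw [this]
    exact mul_le_mul_of_nonneg_right hnΔ_le hδpos.le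
  have hfinal : ∫ θ, φ θ ∂κ < y := by
    have h1 : ∫ θ, φ θ ∂κ ≤ (-M + Δ) + (((∑ i ∈ Finset.range n, (κ (A i)).toReal * Δ)
        + (n : ℝ) * (δ * Δ)) + (κ Kᶜ).toReal * (2 * M)) := by
      rw [← hsum2]
      calc ∫ θ, φ θ ∂κ ≤ ∫ θ, ψ θ ∂κ := hIφψ
        _ = _ := hIψ
        _ ≤ _ := by
            apply add_le_add_right
            exact add_le_add_left hsumCi _
    have h2 : ∫ θ, φ θ ∂κ ≤ (-M + Δ) + (((I₀ + M) + (2 * M + η) * δ) + δ * (2 * M)) := by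
      refine le_trans h1 ?_
      apply add_le_add_right
      exact add_le_add (add_le_add hsumA_le hnδΔ) hKcterm
    have h3 : (2 * M + η) * δ + δ * (2 * M) = (4 * M + η) * δ := by ring
    have h4 : Δ < η := by rw [hΔdef]; linarith
    have h5 : y = I₀ + 3 * η := by rw [hηdef]; ring
    nlinarith [hδη]
  exact hfinal

end Aux5
section Aux6
open Filter Topology Set
set_option linter.unusedSectionVars false

lemma upperSemicontinuous_add_const {X : Type*} [TopologicalSpace X] {f : X → ℝ}
    (hf : UpperSemicontinuous f) (c : ℝ) : UpperSemicontinuous (fun x => f x + c) := by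
  intro x y hy
  have h := hf x (y - c) (by dsimp only at hy ⊢; linarith)
  exact h.mono fun z hz => by dsimp only at hz ⊢; linarith

lemma upperSemicontinuous_coe_ereal {X : Type*} [TopologicalSpace X] {f : X → ℝ}
    (hf : UpperSemicontinuous f) :
    UpperSemicontinuous (fun x => (f x : EReal)) :=
  continuous_coe_real_ereal.comp_upperSemicontinuous hf
    (fun _ _ h => EReal.coe_le_coe_iff.2 h)

lemma usc_biInf' {X ι : Type*} [TopologicalSpace X] {S : Set ι}
    {f : ι → X → EReal} (h : ∀ i ∈ S, UpperSemicontinuous (f i)) :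
    UpperSemicontinuous (fun x => ⨅ i ∈ S, f i x) := by
  intro x y hy
  simp only at hy
  rcases iInf_lt_iff.1 hy with ⟨i, hi⟩
  rcases iInf_lt_iff.1 hi with ⟨hiS, hfi⟩
  filter_upwards [h i hiS x y hfi] with x' h'
  exact lt_of_le_of_lt (iInf₂_le i hiS) h'

lemma exists_max_usc {X : Type*} [TopologicalSpace X] [CompactSpace X] {s : Set X}
    (hs : IsClosed s) (hne : s.Nonempty) {f : X → EReal} (hf : UpperSemicontinuous f) :
    ∃ x ∈ s, ∀ y ∈ s, f y ≤ f x := by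
  classical
  set b : EReal := sSup (f '' s) with hbdef
  by_cases hbot : ∃ r : EReal, r < b
  swap
  · push_neg at hbot
    obtain ⟨x, hx⟩ := hne
    refine ⟨x, hx, fun y hy => ?_⟩
    have h1 : f y ≤ b := by rw [hbdef]; exact le_sSup (Set.mem_image_of_mem f hy)
    exact le_trans h1 (le_trans (hbot ⊥) bot_le)
  · haveI hni : Nonempty {r : EReal // r < b} := ⟨⟨hbot.choose, hbot.choose_spec⟩⟩
    set Z : {r : EReal // r < b} → Set X := fun r => s ∩ f ⁻¹' Ici r.1 with hZdef
    have hZclosed : ∀ r, IsClosed (Z r) := fun r =>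
      hs.inter (upperSemicontinuous_iff_isClosed_preimage.1 hf r.1)
    have hZne : ∀ r, (Z r).Nonempty := by
      rintro ⟨r, hr⟩
      obtain ⟨v, hvmem, hlt⟩ := lt_sSup_iff.1 hr
      obtain ⟨x, hx, rfl⟩ := hvmem
      refine ⟨x, ?_⟩
      simp only [hZdef, Set.mem_inter_iff, Set.mem_preimage, Set.mem_Ici]
      exact ⟨hx, le_of_lt hlt⟩
    have hdir : Directed (· ⊇ ·) Z := by
      rintro r1 r2
      refine ⟨⟨max r1.1 r2.1, max_lt r1.2 r2.2⟩, fun x hx => ?_, fun x hx => ?_⟩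
      · simp only [hZdef, Set.mem_inter_iff, Set.mem_preimage, Set.mem_Ici] at hx ⊢
        exact ⟨hx.1, le_trans (le_max_left _ _) hx.2⟩
      · simp only [hZdef, Set.mem_inter_iff, Set.mem_preimage, Set.mem_Ici] at hx ⊢
        exact ⟨hx.1, le_trans (le_max_right _ _) hx.2⟩
    obtain ⟨x, hx⟩ := IsCompact.nonempty_iInter_of_directed_nonempty_isCompact_isClosed
      Z hdir hZne (fun r => (hZclosed r).isCompact) hZclosed
    rw [mem_iInter] at hx
    have hx' : ∀ r : {r : EReal // r < b}, x ∈ s ∧ r.1 ≤ f x := by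
      intro r
      have h := hx r
      simpa [hZdef, Set.mem_inter_iff, Set.mem_preimage, Set.mem_Ici] using h
    have hxs : x ∈ s := (hx' (Classical.arbitrary _)).1
    refine ⟨x, hxs, fun y hy => ?_⟩
    have hfyb : f y ≤ b := by rw [hbdef]; exact le_sSup (Set.mem_image_of_mem f hy)
    have hbx : b ≤ f x := by
      by_contra hlt
      push_neg at hlt
      obtain ⟨r, hr1, hr2⟩ := exists_between hlt
      exact absurd (hx' ⟨r, hr2⟩).2 (not_le.2 hr1)
    exact hfyb.trans hbx

end Aux6


open MeasureTheory in
/-- Existence of an optimal menu with a non-compact type space (Proposition 5 of the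
paper): if `C` is compact Hausdorff, `Θ` is Hausdorff (not necessarily compact), `U` is
jointly continuous, `V` is jointly upper semicontinuous and uniformly bounded, some
contract is individually rational, `𝕂` is a nonempty set of regular Borel probability
measures on `Θ` and `α : 𝕂 → ℝ` is a penalty, then the principal's problem
`sup_{D ∈ T} inf_{κ ∈ 𝕂} { ∫ V*(θ, D) dκ + α(κ) }` admits a maximizer `D* ∈ T`. -/
theorem exists_optimal_menu_of_bounded {Θ C : Type*}
    [TopologicalSpace C] [CompactSpace C] [T2Space C]
    [TopologicalSpace Θ] [T2Space Θ]
    [MeasurableSpace Θ] [BorelSpace Θ]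
    (U V : Θ × C → ℝ) (hU : Continuous U) (hV : UpperSemicontinuous V)
    (hVbdd : ∃ M : ℝ, ∀ p : Θ × C, |V p| ≤ M)
    (ulow : Θ → ℝ) (hIR : ∃ cstar : C, ∀ θ : Θ, ulow θ ≤ U (θ, cstar))
    (𝕂 : Set (Measure Θ)) (h𝕂ne : 𝕂.Nonempty)
    (h𝕂 : ∀ κ ∈ 𝕂, IsProbabilityMeasure κ ∧ κ.InnerRegular ∧ κ.OuterRegular)
    (α : Measure Θ → ℝ) :
    ∃ Dstar ∈ menusIR U ulow, ∀ D ∈ menusIR U ulow,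
      (⨅ κ ∈ 𝕂, (((∫ θ, Vstar U V θ D ∂κ) + α κ : ℝ) : EReal)) ≤
        ⨅ κ ∈ 𝕂, (((∫ θ, Vstar U V θ Dstar ∂κ) + α κ : ℝ) : EReal) := by
  classical
  obtain ⟨M₀, hM₀⟩ := hVbdd
  set M : ℝ := max M₀ 0 with hMdef
  have hM : ∀ p : Θ × C, |V p| ≤ M := fun p => le_trans (hM₀ p) (le_max_left _ _)
  have hM0 : (0 : ℝ) ≤ M := le_max_right _ _
  obtain ⟨cstar, hcstar⟩ := hIR
  haveI : Nonempty C := ⟨cstar⟩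
  have hTne : (menusIR U ulow).Nonempty := by
    refine ⟨⟨Set.univ, Set.univ_nonempty, isClosed_univ⟩, fun θ => ?_⟩
    exact le_trans (hcstar θ) (le_Ustar hU θ _ (Set.mem_univ cstar))
  have hTclosed : IsClosed (menusIR U ulow) := isClosed_menusIR hU ulow
  have hGusc : UpperSemicontinuous
      (fun D : CL C => ⨅ κ ∈ 𝕂, (((∫ θ, Vstar U V θ D ∂κ) + α κ : ℝ) : EReal)) := by
    refine usc_biInf'
      (f := fun κ : Measure Θ => fun D : CL C =>
        (((∫ θ, Vstar U V θ D ∂κ) + α κ : ℝ) : EReal)) ?_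
    intro κ hκ
    obtain ⟨hprob, hinner, houter⟩ := h𝕂 κ hκ
    haveI := hprob
    exact upperSemicontinuous_coe_ereal
      (upperSemicontinuous_add_const (usc_integral_Vstar hU hV hM hM0 κ hinner houter) (α κ))
  obtain ⟨Dstar, hmem, hmax⟩ := exists_max_usc hTclosed hTne hGusc
  exact ⟨Dstar, hmem, fun D hD => hmax D hD⟩
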